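/- With the Syracuse map S and sequences a_i(N), R_i(N) as defined, for any vector a ∈ ℕ^k (with all a_i ≥ 1) and any vector R ∈ {r(1),...,r(p-1)}^{k+1}, the set E_k(a,R) = {N ∈ ℕ \ pℕ : (a_1(N),...,a_k(N)) = a and (R_1(N),...,R_{k+1}(N)) = R} is exactly one residue class modulo p^{|a|+1}, where |a| = a_1 + ... + a_k. -/

import Mathlib

private lemma padic_eq_max (p n : ℕ) : padicValNat p n = p.maxPowDiv n :=
  rfl

private lemma padic_pow_mul {p u : ℕ} (a : ℕ) (hp : 1 < p) (hu : ¬ p ∣ u) :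
    padicValNat p (p ^ a * u) = a := by
  have hu0 : 0 < u := Nat.pos_of_ne_zero (fun h => hu (h ▸ dvd_zero p))
  rw [Nat.maxPowDiv.base_pow_mul hp hu0.ne', padic_eq_max]
  have h0 : p.maxPowDiv u = 0 := by
    rw [← padic_eq_max]; exact padicValNat.eq_zero_of_not_dvd hu
  omega

private lemma padic_decomp {p n : ℕ} (hp : 1 < p) (hn : n ≠ 0) :
    n = p ^ padicValNat p n * (n / p ^ padicValNat p n) ∧
      ¬ p ∣ n / p ^ padicValNat p n ∧ 0 < n / p ^ padicValNat p n := by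
  have hd : p ^ padicValNat p n ∣ n := pow_padicValNat_dvd
  have heq := Nat.mul_div_cancel' hd
  have hpos : 0 < n / p ^ padicValNat p n := by
    rcases Nat.eq_zero_or_pos (n / p ^ padicValNat p n) with h | h
    · rw [h, mul_zero] at heq; exact absurd heq.symm hn
    · exact h
  refine ⟨heq.symm, ?_, hpos⟩
  rintro ⟨c, hc⟩
  have hdvd : p ^ (padicValNat p n + 1) ∣ n := by
    refine ⟨c, ?_⟩
    calc n = p ^ padicValNat p n * (n / p ^ padicValNat p n) := heq.symm
      _ = p ^ padicValNat p n * (p * c) := by rw [hc]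
      _ = p ^ (padicValNat p n + 1) * c := by ring
  have hle : padicValNat p n + 1 ≤ p.maxPowDiv n :=
    (Nat.pow_dvd_iff_le_padicValNat hp.ne' hn).mp hdvd
  rw [← padic_eq_max] at hle
  omega

private lemma r_inj {p q : ℕ} (hp : 2 ≤ p) (hpq : Nat.Coprime p q) {r : ℕ → ℤ}
    (hr2 : ∀ j, 1 ≤ j → j < p → (p : ℤ) ∣ q * j + r j)
    {j1 j2 : ℕ} (h11 : 1 ≤ j1) (h12 : j1 < p) (h21 : 1 ≤ j2) (h22 : j2 < p)
    (hr : r j1 = r j2) : j1 = j2 := by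
  have d1 := hr2 j1 h11 h12
  have d2 := hr2 j2 h21 h22
  have hdq : (p : ℤ) ∣ (q : ℤ) * ((j1 : ℤ) - j2) := by
    have h : (q : ℤ) * ((j1 : ℤ) - j2) = ((q : ℤ) * j1 + r j1) - ((q : ℤ) * j2 + r j2) := by
      rw [hr]; ring
    rw [h]; exact dvd_sub d1 d2
  have hcop : IsCoprime (p : ℤ) (q : ℤ) := by
    rw [Int.isCoprime_iff_gcd_eq_one, Int.gcd_natCast_natCast]; exact hpq
  have hd : (p : ℤ) ∣ (j1 : ℤ) - j2 := hcop.dvd_of_dvd_mul_left hdq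
  have h0 : (j1 : ℤ) - j2 = 0 := by
    refine Int.eq_zero_of_abs_lt_dvd hd (abs_lt.mpr ⟨?_, ?_⟩) <;> push_cast <;> omega
  omega

private lemma S_decomp {p q : ℕ} (hp : 2 ≤ p) {r : ℕ → ℤ}
    (hr1 : ∀ j, 1 ≤ j → j < p → 1 ≤ q * j + r j)
    (hr2 : ∀ j, 1 ≤ j → j < p → (p : ℤ) ∣ q * j + r j)
    {S : ℕ → ℕ}
    (hS : ∀ N, S N = ((q * N : ℤ) + r (N % p)).toNat /
      p ^ (padicValNat p ((q * N : ℤ) + r (N % p)).toNat))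
    {N j : ℕ} (hj1 : 1 ≤ j) (hjp : j < p) (hNj : N % p = j) :
    ((q * N : ℤ) + r j).toNat ≠ 0 ∧
    ((q * N : ℤ) + r j) = (((q * N : ℤ) + r j).toNat : ℤ) ∧
    ((q * N : ℤ) + r j).toNat
      = p ^ (padicValNat p ((q * N : ℤ) + r j).toNat) * S N ∧
    ¬ p ∣ S N ∧ 0 < S N ∧ 1 ≤ padicValNat p ((q * N : ℤ) + r j).toNat := by
  have hjN : j ≤ N := hNj ▸ Nat.mod_le N p
  have hX1 : (1 : ℤ) ≤ (q * N : ℤ) + r j := by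
    have h1 := hr1 j hj1 hjp
    have h2 : (q : ℤ) * j ≤ (q : ℤ) * N := by
      have : (j : ℤ) ≤ (N : ℤ) := by exact_mod_cast hjN
      exact mul_le_mul_of_nonneg_left this (by positivity)
    linarith
  have hcast : ((q * N : ℤ) + r j) = (((q * N : ℤ) + r j).toNat : ℤ) :=
    (Int.toNat_of_nonneg (by linarith)).symm
  set n : ℕ := ((q * N : ℤ) + r j).toNat with hn
  have hn0 : n ≠ 0 := by
    intro h
    rw [h, Nat.cast_zero] at hcast
    linarith
  -- p ∣ n
  have hNd : (N : ℤ) - j = p * (N / p : ℕ) := by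
    have h := Nat.div_add_mod N p
    rw [hNj] at h
    have h' : (p : ℤ) * ((N / p : ℕ) : ℤ) + j = N := by exact_mod_cast h
    linarith
  have hdX : (p : ℤ) ∣ (q * N : ℤ) + r j := by
    have hd0 : (p : ℤ) ∣ ((N : ℤ) - j) := ⟨(N / p : ℕ), hNd⟩
    have h1 : (p : ℤ) ∣ (q : ℤ) * ((N : ℤ) - j) := hd0.mul_left (q : ℤ)
    have h2 := hr2 j hj1 hjp
    have h3 : (q * N : ℤ) + r j = (q : ℤ) * ((N : ℤ) - j) + ((q : ℤ) * j + r j) := by ring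
    rw [h3]; exact dvd_add h1 h2
  have hdn : p ∣ n := by
    have : (p : ℤ) ∣ (n : ℤ) := hcast ▸ hdX
    exact_mod_cast this
  obtain ⟨hdec, hnd, hpos⟩ := padic_decomp (by omega : 1 < p) hn0
  have hSN : S N = n / p ^ padicValNat p n := by rw [hS N, hNj]
  have hv1 : 1 ≤ padicValNat p n := by
    rcases Nat.eq_zero_or_pos (padicValNat p n) with h | h
    · rw [h, pow_zero, one_mul] at hdec
      rw [h, pow_zero, Nat.div_one] at hnd
      exact absurd hdn hnd
    · exact h
  exact ⟨hn0, hcast, by rw [hSN]; exact hdec, by rw [hSN]; exact hnd,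
    by rw [hSN]; exact hpos, hv1⟩

/-- The set `E_k(a,R)` of inputs with prescribed valuation vector `a` and residue-value
vector `R` is exactly one residue class modulo `p^{|a|+1}`. -/
theorem stmt3 (p q : ℕ) (hp : 2 ≤ p) (hq : 2 ≤ q) (hpq : Nat.Coprime p q)
    (r : ℕ → ℤ) (hr1 : ∀ j, 1 ≤ j → j < p → 1 ≤ q * j + r j)
    (hr2 : ∀ j, 1 ≤ j → j < p → (p : ℤ) ∣ q * j + r j)
    (S : ℕ → ℕ)
    (hS : ∀ N, S N = ((q * N : ℤ) + r (N % p)).toNat /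
      p ^ (padicValNat p ((q * N : ℤ) + r (N % p)).toNat))
    (a : ℕ → ℕ → ℕ)
    (ha : ∀ i N, a i N = padicValNat p ((q * S^[i] N : ℤ) + r (S^[i] N % p)).toNat)
    (R : ℕ → ℕ → ℤ)
    (hR : ∀ i N, R i N = r (S^[i] N % p))
    (k : ℕ) (av : ℕ → ℕ) (hav : ∀ i < k, 1 ≤ av i)
    (Rv : ℕ → ℤ) (hRv : ∀ i < k + 1, ∃ j, 1 ≤ j ∧ j < p ∧ Rv i = r j) :
    ∃ N₀ : ℕ, 1 ≤ N₀ ∧ ¬ p ∣ N₀ ∧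
      ∀ N : ℕ, 1 ≤ N →
        (((¬ p ∣ N) ∧ (∀ i < k, a i N = av i) ∧ (∀ i < k + 1, R i N = Rv i)) ↔
          N % p ^ ((∑ i ∈ Finset.range k, av i) + 1)
            = N₀ % p ^ ((∑ i ∈ Finset.range k, av i) + 1)) := by
  have hR0 : ∀ N', R 0 N' = r (N' % p) := by
    intro N'; rw [hR]; simp only [Function.iterate_zero, id_eq]
  have ha0 : ∀ N', a 0 N' = padicValNat p ((q * N' : ℤ) + r (N' % p)).toNat := by
    intro N'; rw [ha]; simp only [Function.iterate_zero, id_eq]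
  have hashift : ∀ i N', a (i + 1) N' = a i (S N') := by
    intro i N'; rw [ha, ha, Function.iterate_succ_apply]
  have hRshift : ∀ i N', R (i + 1) N' = R i (S N') := by
    intro i N'; rw [hR, hR, Function.iterate_succ_apply]
  induction k generalizing av Rv with
  | zero =>
    obtain ⟨j0, hj01, hj0p, hj0r⟩ := hRv 0 (by omega)
    refine ⟨j0, hj01, fun hd => absurd (Nat.le_of_dvd (by omega) hd) (by omega), ?_⟩
    intro N hN
    simp only [Finset.range_zero, Finset.sum_empty, zero_add, pow_one]
    constructor
    · rintro ⟨hpN, -, hRc⟩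
      have h0 := hRc 0 (by omega)
      rw [hR0] at h0
      have hN1 : 1 ≤ N % p := by
        rcases Nat.eq_zero_or_pos (N % p) with h | h
        · exact absurd (Nat.dvd_of_mod_eq_zero h) hpN
        · exact h
      have hNp : N % p < p := Nat.mod_lt _ (by omega)
      rw [r_inj hp hpq hr2 hN1 hNp hj01 hj0p (h0.trans hj0r), Nat.mod_eq_of_lt hj0p]
    · intro hmod
      rw [Nat.mod_eq_of_lt hj0p] at hmod
      have hpN : ¬ p ∣ N := by
        intro hd
        have := Nat.mod_eq_zero_of_dvd hd
        omega
      refine ⟨hpN, fun i hi => absurd hi (by omega), ?_⟩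
      intro i hi
      have hi0 : i = 0 := by omega
      subst hi0
      rw [hR0, hmod]
      exact hj0r.symm
  | succ k IH =>
    obtain ⟨j0, hj01, hj0p, hj0r⟩ := hRv 0 (by omega)
    obtain ⟨M₀, hM1, hMp, hM⟩ := IH (fun i => av (i + 1)) (fun i hi => hav (i + 1) (by omega))
      (fun i => Rv (i + 1)) (fun i hi => hRv (i + 1) (by omega))
    
    have hav0 : 1 ≤ av 0 := hav 0 (by omega)
    set t := ∑ i ∈ Finset.range k, av (i + 1) with ht
    have hsum : (∑ i ∈ Finset.range (k + 1), av i) + 1 = av 0 + (t + 1) := by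
      rw [Finset.sum_range_succ', ← ht]; omega
    set m := p ^ (av 0 + (t + 1)) with hm
    have hm1 : 1 < m := by rw [hm]; exact Nat.one_lt_pow (by omega) (by omega)
    have hmz : (m : ℤ) ≠ 0 := by exact_mod_cast (by omega : m ≠ 0)
    have hpm : p ∣ m := by rw [hm]; exact dvd_pow_self p (by omega)
    have hpmZ : (p : ℤ) ∣ (m : ℤ) := Int.natCast_dvd_natCast.mpr hpm
    have hsplit : (m : ℤ) = (p : ℤ) ^ (av 0) * (p : ℤ) ^ (t + 1) := by
      rw [hm]; push_cast; rw [pow_add]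
    obtain ⟨b, -, hb⟩ := Nat.exists_mul_mod_eq_one_of_coprime (hpq.symm.pow_right _) hm1
    have hqb : ((q * b : ℕ) : ℤ) ≡ ((1 : ℕ) : ℤ) [ZMOD (m : ℤ)] :=
      Int.natCast_modEq_iff.mpr (by unfold Nat.ModEq; rw [hb, Nat.mod_eq_of_lt hm1])
    have hqb' : (q : ℤ) * (b : ℤ) ≡ 1 [ZMOD (m : ℤ)] := by push_cast at hqb; exact hqb
    have hT2 : (p : ℤ) ^ (av 0) * M₀ - r j0 ≡ (q : ℤ) * j0 [ZMOD (p : ℤ)] := by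
      rw [Int.modEq_iff_dvd]
      have h2 := hr2 j0 hj01 hj0p
      have h1 : (p : ℤ) ∣ (p : ℤ) ^ (av 0) * M₀ :=
        dvd_mul_of_dvd_left (dvd_pow_self _ (by omega)) _
      have h3 : (q : ℤ) * j0 - ((p : ℤ) ^ (av 0) * M₀ - r j0)
          = ((q : ℤ) * j0 + r j0) - (p : ℤ) ^ (av 0) * M₀ := by ring
      rw [h3]; exact dvd_sub h2 h1
    have hres : ∀ n : ℕ,
        (q : ℤ) * n ≡ (p : ℤ) ^ (av 0) * M₀ - r j0 [ZMOD (m : ℤ)] → n % p = j0 := by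
      intro n hn
      have h1 : (q : ℤ) * n ≡ (q : ℤ) * j0 [ZMOD (p : ℤ)] := (hn.of_dvd hpmZ).trans hT2
      have h2 : (q * n : ℕ) ≡ (q * j0 : ℕ) [MOD p] := by
        rw [← Int.natCast_modEq_iff]; push_cast; exact h1
      have h3 : n ≡ j0 [MOD p] := Nat.ModEq.cancel_left_of_coprime hpq h2
      have h4 := h3
      rwa [Nat.ModEq, Nat.mod_eq_of_lt hj0p] at h4
    have hresrev : ∀ n : ℕ, n % p = j0 → 1 ≤ n ∧ ¬ p ∣ n := by
      intro n hn
      constructor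
      · rcases Nat.eq_zero_or_pos n with h | h
        · rw [h, Nat.zero_mod] at hn; omega
        · exact h
      · intro hd
        have := Nat.mod_eq_zero_of_dvd hd
        omega
    have hc0 : 0 ≤ ((b : ℤ) * ((p : ℤ) ^ (av 0) * M₀ - r j0)) % (m : ℤ) :=
      Int.emod_nonneg _ hmz
    obtain ⟨N₀, hN₀cast⟩ : ∃ N₀ : ℕ,
        (N₀ : ℤ) = ((b : ℤ) * ((p : ℤ) ^ (av 0) * M₀ - r j0)) % (m : ℤ) :=
      ⟨_, Int.toNat_of_nonneg hc0⟩
    have hqN0 : (q : ℤ) * N₀ ≡ (p : ℤ) ^ (av 0) * M₀ - r j0 [ZMOD (m : ℤ)] := by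
      calc (q : ℤ) * N₀
          = (q : ℤ) * (((b : ℤ) * ((p : ℤ) ^ (av 0) * M₀ - r j0)) % (m : ℤ)) := by
            rw [hN₀cast]
        _ ≡ (q : ℤ) * ((b : ℤ) * ((p : ℤ) ^ (av 0) * M₀ - r j0)) [ZMOD (m : ℤ)] :=
            Int.ModEq.mul_left _ (Int.emod_emod_of_dvd _ dvd_rfl)
        _ = ((q : ℤ) * b) * ((p : ℤ) ^ (av 0) * M₀ - r j0) := by ring
        _ ≡ 1 * ((p : ℤ) ^ (av 0) * M₀ - r j0) [ZMOD (m : ℤ)] := Int.ModEq.mul_right _ hqb'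
        _ = (p : ℤ) ^ (av 0) * M₀ - r j0 := one_mul _
    have hN0j : N₀ % p = j0 := hres N₀ hqN0
    obtain ⟨hN0pos, hN0nd⟩ := hresrev N₀ hN0j
    refine ⟨N₀, hN0pos, hN0nd, ?_⟩
    intro N hN
    rw [hsum, ← hm]
    constructor
    · rintro ⟨hpN, hA, hRc⟩
      have hN1 : 1 ≤ N % p := by
        rcases Nat.eq_zero_or_pos (N % p) with h | h
        · exact absurd (Nat.dvd_of_mod_eq_zero h) hpN
        · exact h
      have hNp : N % p < p := Nat.mod_lt _ (by omega)
      have hNj : N % p = j0 := by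
        have h0 := hRc 0 (by omega)
        rw [hR0] at h0
        exact r_inj hp hpq hr2 hN1 hNp hj01 hj0p (h0.trans hj0r)
      obtain ⟨hn0, hcast, hdec, hSnd, hSpos, hv1⟩ := S_decomp hp hr1 hr2 hS hj01 hj0p hNj
      have hA0 : a 0 N = av 0 := hA 0 (by omega)
      have ha0N : a 0 N = padicValNat p ((q * N : ℤ) + r j0).toNat := by
        rw [ha0, hNj]
      have hSA : ∀ i < k, a i (S N) = av (i + 1) := fun i hi => by
        rw [← hashift]; exact hA (i + 1) (by omega)
      have hSR : ∀ i < k + 1, R i (S N) = Rv (i + 1) := fun i hi => by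
        rw [← hRshift]; exact hRc (i + 1) (by omega)
      have hSM := (hM (S N) hSpos).mp ⟨hSnd, hSA, hSR⟩
      have hSMZ : ((S N : ℕ) : ℤ) ≡ (M₀ : ℤ) [ZMOD ((p ^ (t + 1) : ℕ) : ℤ)] :=
        Int.natCast_modEq_iff.mpr hSM
      have hXeq : (q * N : ℤ) + r j0 = (p : ℤ) ^ (av 0) * (S N : ℤ) := by
        have hv : padicValNat p ((q * N : ℤ) + r j0).toNat = av 0 := by
          rw [← ha0N]; exact hA0
        rw [hcast, hdec, hv]; push_cast; ring
      have hqNT : (q : ℤ) * N ≡ (p : ℤ) ^ (av 0) * M₀ - r j0 [ZMOD (m : ℤ)] := by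
        rw [Int.modEq_iff_dvd]
        obtain ⟨Z, hZ⟩ := hSMZ.dvd
        push_cast at hZ
        refine ⟨Z, ?_⟩
        rw [hsplit]
        linear_combination -hXeq + (p : ℤ) ^ (av 0) * hZ
      have hqq : (q : ℤ) * N ≡ (q : ℤ) * N₀ [ZMOD (m : ℤ)] := hqNT.trans hqN0.symm
      have hNat : (q * N : ℕ) ≡ (q * N₀ : ℕ) [MOD m] := by
        rw [← Int.natCast_modEq_iff]; push_cast; exact hqq
      have hcopm : Nat.Coprime m q := by rw [hm]; exact Nat.Coprime.pow_left _ hpq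
      exact Nat.ModEq.cancel_left_of_coprime hcopm hNat
    · intro hmod
      have hNZ : (N : ℤ) ≡ (N₀ : ℤ) [ZMOD (m : ℤ)] := Int.natCast_modEq_iff.mpr hmod
      have hqNT : (q : ℤ) * N ≡ (p : ℤ) ^ (av 0) * M₀ - r j0 [ZMOD (m : ℤ)] :=
        (hNZ.mul_left (q : ℤ)).trans hqN0
      have hNj : N % p = j0 := hres N hqNT
      obtain ⟨hn0, hcast, hdec, hSnd, hSpos, hv1⟩ := S_decomp hp hr1 hr2 hS hj01 hj0p hNj
      obtain ⟨Z, hZ⟩ := hqNT.dvd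
      rw [hsplit] at hZ
      have hXY : (q * N : ℤ) + r j0 = (p : ℤ) ^ (av 0) * ((M₀ : ℤ) - (p : ℤ) ^ (t + 1) * Z) := by
        linear_combination -hZ
      have hXpos : (1 : ℤ) ≤ (q * N : ℤ) + r j0 := by
        rw [hcast]; exact_mod_cast Nat.one_le_iff_ne_zero.mpr hn0
      have hYpos : (1 : ℤ) ≤ (M₀ : ℤ) - (p : ℤ) ^ (t + 1) * Z := by
        by_contra hcon
        push_neg at hcon
        have hp0 : (0 : ℤ) < (p : ℤ) ^ (av 0) := by positivity
        nlinarith [hXY]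
      have hYnd : ¬ (p : ℤ) ∣ ((M₀ : ℤ) - (p : ℤ) ^ (t + 1) * Z) := by
        intro hd
        have h1 : (p : ℤ) ∣ (p : ℤ) ^ (t + 1) * Z :=
          dvd_mul_of_dvd_left (dvd_pow_self _ (by omega)) _
        have h3 : (M₀ : ℤ) = ((M₀ : ℤ) - (p : ℤ) ^ (t + 1) * Z) + (p : ℤ) ^ (t + 1) * Z := by
          ring
        have h2 : (p : ℤ) ∣ (M₀ : ℤ) := by rw [h3]; exact dvd_add hd h1
        exact hMp (by exact_mod_cast h2)
      obtain ⟨Y, hYc⟩ : ∃ Y : ℕ, (Y : ℤ) = (M₀ : ℤ) - (p : ℤ) ^ (t + 1) * Z :=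
        ⟨_, Int.toNat_of_nonneg (by linarith)⟩
      have hYnd' : ¬ p ∣ Y := fun hd => hYnd (hYc ▸ Int.natCast_dvd_natCast.mpr hd)
      have hXnat : ((q * N : ℤ) + r j0).toNat = p ^ (av 0) * Y := by
        have h5 : (((q * N : ℤ) + r j0).toNat : ℤ) = ((p ^ (av 0) * Y : ℕ) : ℤ) := by
          rw [← hcast, hXY, ← hYc]; push_cast; ring
        exact_mod_cast h5
      have hv : padicValNat p ((q * N : ℤ) + r j0).toNat = av 0 := by
        rw [hXnat]; exact padic_pow_mul _ (by omega) hYnd'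
      have hSY : S N = Y := by
        rw [hv] at hdec
        rw [hXnat] at hdec
        exact (Nat.eq_of_mul_eq_mul_left (by positivity) hdec).symm
      have hSM : S N % p ^ (t + 1) = M₀ % p ^ (t + 1) := by
        have h6 : ((S N : ℕ) : ℤ) ≡ (M₀ : ℤ) [ZMOD ((p ^ (t + 1) : ℕ) : ℤ)] := by
          rw [hSY, hYc, Int.modEq_iff_dvd]
          refine ⟨Z, ?_⟩; push_cast; ring
        exact Int.natCast_modEq_iff.mp h6
      obtain ⟨hSnd', hSA, hSR⟩ := (hM (S N) hSpos).mpr hSM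
      obtain ⟨hN1', hNnd⟩ := hresrev N hNj
      refine ⟨hNnd, ?_, ?_⟩
      · intro i hi
        rcases i with _ | i
        · rw [ha0, hNj]; exact hv
        · rw [hashift]; exact hSA i (by omega)
      · intro i hi
        rcases i with _ | i
        · rw [hR0, hNj]; exact hj0r.symm
        · rw [hRshift]; exact hSR i (by omega)
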